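/- Let 0 < β < α and C̃ > 0. Let g : ℝ → ℝ be a continuous function satisfying |∫_{-∞}^T e^{αt} g(t) dt| ≤ C̃ e^{βT} for all T ∈ ℝ. Let ε > 0 and κ > 0. Then for every T ≥ T₀ := (1/ε) log(2C̃(β+ε)/κ) and every S ≥ T + (4C̃/κ) e^{-εT}, there exists t ∈ [T, S] with |g(t)| ≤ κ e^{-(α-β)t + εt}. -/

import Mathlib

open MeasureTheory Set

lemma taylor4 (y : ℝ) (h0 : 0 ≤ y) (h2 : y ≤ 2) :
    y * (Real.exp y + 1) ≤ 4 * (Real.exp y - 1) := by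
  have h := Real.add_one_le_exp (y / 2)
  have he : Real.exp y = Real.exp (y / 2) * Real.exp (y / 2) := by
    rw [← Real.exp_add]; ring_nf
  have hp : (0:ℝ) < Real.exp (y / 2) := Real.exp_pos _
  have hs : (1 + y/2) * (1 + y/2) ≤ Real.exp (y/2) * Real.exp (y/2) :=
    mul_le_mul (by linarith) (by linarith) (by linarith) hp.le
  have h5 := mul_le_mul_of_nonneg_left hs (show (0:ℝ) ≤ 4 - y by linarith)
  have hy3 : y * y * y ≤ 2 * (y * y) := by nlinarith
  nlinarith [h5, hy3]

lemma keylem (b c δ u : ℝ) (hb : 0 < b) (hbc : b ≤ c) (hδ : 0 < δ) (hδu : δ ≤ u)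
    (hδc : c * δ ≤ 2) :
    δ / 4 * (Real.exp (b * u) + 1) ≤ (Real.exp (c * u) - 1) / c := by
  have hc : 0 < c := lt_of_lt_of_le hb hbc
  set f : ℝ → ℝ := fun x => (Real.exp (c * x) - 1) / c - δ / 4 * (Real.exp (b * x) + 1) with hf
  have hder : ∀ x : ℝ, HasDerivAt f (Real.exp (c * x) - δ / 4 * (Real.exp (b * x) * b)) x := by
    intro x
    have h1 : HasDerivAt (fun x : ℝ => Real.exp (c * x)) (Real.exp (c * x) * c) x := by
      simpa using ((hasDerivAt_id x).const_mul c).exp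
    have h2 : HasDerivAt (fun x : ℝ => Real.exp (b * x)) (Real.exp (b * x) * b) x := by
      simpa using ((hasDerivAt_id x).const_mul b).exp
    have := ((h1.sub_const 1).div_const c).sub ((h2.add_const 1).const_mul (δ / 4))
    convert this using 1
    exacts [rfl, rfl, rfl, by field_simp]
  have hmono : MonotoneOn f (Ici δ) := by
    refine monotoneOn_of_deriv_nonneg (convex_Ici δ) (Continuous.continuousOn (by fun_prop))
      (fun x hx => (hder x).differentiableAt.differentiableWithinAt) (fun x hx => ?_)
    rw [interior_Ici] at hx
    rw [(hder x).deriv]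
    have hx0 : 0 < x := lt_trans hδ hx
    have hexp : Real.exp (b * x) ≤ Real.exp (c * x) :=
      Real.exp_le_exp.2 (by nlinarith)
    have hδb : δ * b ≤ 2 := le_trans (by nlinarith) hδc
    nlinarith [Real.exp_pos (b * x), Real.exp_pos (c * x)]
  have hfδ : 0 ≤ f δ := by
    have ht := taylor4 (c * δ) (by positivity) hδc
    have hexp : Real.exp (b * δ) ≤ Real.exp (c * δ) :=
      Real.exp_le_exp.2 (by nlinarith)
    have : δ / 4 * (Real.exp (b * δ) + 1) ≤ (Real.exp (c * δ) - 1) / c := by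
      rw [le_div_iff₀ hc]
      nlinarith [Real.exp_pos (b * δ), mul_le_mul_of_nonneg_left hexp
        (by positivity : (0:ℝ) ≤ δ * c / 4)]
    simp only [hf]; linarith
  have := hmono (mem_Ici.2 le_rfl) (mem_Ici.2 hδu) hδu
  have : 0 ≤ f u := le_trans hfδ this
  simp only [hf] at this
  linarith

theorem stmt0 (α β C κ ε : ℝ) (hβ : 0 < β) (hβα : β < α) (hC : 0 < C)
    (hε : 0 < ε) (hκ : 0 < κ) (g : ℝ → ℝ) (hg : Continuous g)
    (hint : ∀ T : ℝ, IntegrableOn (fun t => Real.exp (α * t) * g t) (Iic T))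
    (hbd : ∀ T : ℝ, |∫ t in Iic T, Real.exp (α * t) * g t| ≤ C * Real.exp (β * T)) :
    ∀ T ≥ (1 / ε) * Real.log (2 * C * (β + ε) / κ),
      ∀ S ≥ T + (4 * C / κ) * Real.exp (-ε * T),
        ∃ t ∈ Icc T S, |g t| ≤ κ * Real.exp (-(α - β) * t + ε * t) := by
  intro T hT S hS
  by_contra hcon
  push_neg at hcon
  have hc : 0 < β + ε := by linarith
  set δ : ℝ := 4 * C / κ * Real.exp (-ε * T) with hδdef
  have hδpos : 0 < δ := by positivity
  have hTS : T < S := by linarith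
  have hδu : δ ≤ S - T := by linarith
  -- exp(εT) ≥ 2C(β+ε)/κ
  have hD : (0:ℝ) < 2 * C * (β + ε) / κ := by positivity
  have hE : 2 * C * (β + ε) / κ ≤ Real.exp (ε * T) := by
    rw [← Real.exp_log hD]
    apply Real.exp_le_exp.2
    calc Real.log (2 * C * (β + ε) / κ) = ε * (1 / ε * Real.log (2 * C * (β + ε) / κ)) := by
          field_simp
      _ ≤ ε * T := mul_le_mul_of_nonneg_left hT hε.le
  have hEE : Real.exp (-ε * T) * Real.exp (ε * T) = 1 := by
    rw [← Real.exp_add]; simp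
  have hδc : (β + ε) * δ ≤ 2 := by
    have hp : (0:ℝ) < Real.exp (ε * T) := Real.exp_pos _
    have h1 : δ * Real.exp (ε * T) = 4 * C / κ := by
      rw [hδdef, mul_assoc, hEE, mul_one]
    have h2 : (β + ε) * δ * Real.exp (ε * T) = (β + ε) * (4 * C / κ) := by
      rw [mul_assoc, h1]
    have h3 : (β + ε) * (4 * C / κ) = 2 * (2 * C * (β + ε) / κ) := by ring
    nlinarith [h2, h3, hE, hp]
  -- key numeric inequality
  have K := keylem β (β + ε) δ (S - T) hβ (by linarith) hδpos hδu hδc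
  have eβ : Real.exp (β * (S - T)) * Real.exp (β * T) = Real.exp (β * S) := by
    rw [← Real.exp_add]; ring_nf
  have ec : Real.exp ((β + ε) * (S - T)) * Real.exp ((β + ε) * T) = Real.exp ((β + ε) * S) := by
    rw [← Real.exp_add]; ring_nf
  have eδ : Real.exp (-ε * T) * Real.exp ((β + ε) * T) = Real.exp (β * T) := by
    rw [← Real.exp_add]; ring_nf
  have KI : C * Real.exp (β * S) + C * Real.exp (β * T)
      ≤ κ / (β + ε) * (Real.exp ((β + ε) * S) - Real.exp ((β + ε) * T)) := by
    rw [div_mul_eq_mul_div, le_div_iff₀ hc]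
    have K2 : δ / 4 * (Real.exp (β * (S - T)) + 1) * (β + ε)
        ≤ Real.exp ((β + ε) * (S - T)) - 1 := (le_div_iff₀ hc).1 K
    have K3 := mul_le_mul_of_nonneg_left K2
      (le_of_lt (by positivity : (0:ℝ) < κ * Real.exp ((β + ε) * T)))
    have hκδ : κ * δ = 4 * C * Real.exp (-ε * T) := by
      rw [hδdef]; field_simp
    have E1 : κ * Real.exp ((β + ε) * T) * (δ / 4 * (Real.exp (β * (S - T)) + 1) * (β + ε))
        = (C * Real.exp (β * S) + C * Real.exp (β * T)) * (β + ε) := by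
      linear_combination ((β + ε) / 4 * Real.exp ((β + ε) * T) * (Real.exp (β * (S - T)) + 1)) * hκδ
        + ((β + ε) * C * (Real.exp (β * (S - T)) + 1)) * eδ + ((β + ε) * C) * eβ
    have E2 : κ * Real.exp ((β + ε) * T) * (Real.exp ((β + ε) * (S - T)) - 1)
        = κ * (Real.exp ((β + ε) * S) - Real.exp ((β + ε) * T)) := by
      linear_combination κ * ec
    linarith [K3, E1, E2]
  -- integral identities
  have hJ : (∫ t in T..S, κ * Real.exp ((β + ε) * t))
      = κ / (β + ε) * (Real.exp ((β + ε) * S) - Real.exp ((β + ε) * T)) := by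
    have hd : ∀ x ∈ uIcc T S, HasDerivAt (fun t => κ / (β + ε) * Real.exp ((β + ε) * t))
        (κ * Real.exp ((β + ε) * x)) x := by
      intro x _
      have h := (((hasDerivAt_id x).const_mul (β + ε)).exp).const_mul (κ / (β + ε))
      convert h using 1
      exacts [rfl, rfl, rfl, by field_simp; rfl]
    rw [intervalIntegral.integral_eq_sub_of_hasDerivAt hd
      ((Continuous.intervalIntegrable (by fun_prop) T S))]
    ring
  have hI : (∫ t in Iic S, Real.exp (α * t) * g t) - (∫ t in Iic T, Real.exp (α * t) * g t)
      = ∫ t in T..S, Real.exp (α * t) * g t :=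
    intervalIntegral.integral_Iic_sub_Iic (hint T) (hint S)
  -- sign constancy of g on [T, S]
  have hne : ∀ t ∈ Icc T S, g t ≠ 0 := by
    intro t ht h0
    have h1 := hcon t ht
    rw [h0, abs_zero] at h1
    exact absurd h1 (not_lt.2 (by positivity))
  have hsgn : (∀ t ∈ Icc T S, 0 < g t) ∨ (∀ t ∈ Icc T S, g t < 0) := by
    rcases lt_or_gt_of_ne (hne T (left_mem_Icc.2 hTS.le)) with hneg | hpos
    · right
      intro t ht
      by_contra hle
      push_neg at hle
      have hlt : 0 < g t := lt_of_le_of_ne hle (Ne.symm (hne t ht))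
      have hsub : Icc (g T) (g t) ⊆ g '' Icc T t := by
        apply intermediate_value_Icc ht.1 hg.continuousOn
      obtain ⟨c, hc1, hc2⟩ := hsub ⟨hneg.le, hlt.le⟩
      exact hne c (Icc_subset_Icc le_rfl ht.2 hc1) hc2
    · left
      intro t ht
      by_contra hle
      push_neg at hle
      have hlt : g t < 0 := lt_of_le_of_ne hle (hne t ht)
      have hsub : Icc (g t) (g T) ⊆ g '' Icc T t := by
        apply intermediate_value_Icc' ht.1 hg.continuousOn
      obtain ⟨c, hc1, hc2⟩ := hsub ⟨hlt.le, hpos.le⟩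
      exact hne c (Icc_subset_Icc le_rfl ht.2 hc1) hc2
  -- bound on |I|
  have habs : |(∫ t in Iic S, Real.exp (α * t) * g t) - (∫ t in Iic T, Real.exp (α * t) * g t)|
      ≤ C * Real.exp (β * S) + C * Real.exp (β * T) := by
    calc _ ≤ |∫ t in Iic S, Real.exp (α * t) * g t| + |∫ t in Iic T, Real.exp (α * t) * g t| :=
          abs_sub _ _
      _ ≤ _ := add_le_add (hbd S) (hbd T)
  have hexpid : ∀ t : ℝ, Real.exp (α * t) * Real.exp (-(α - β) * t + ε * t)
      = Real.exp ((β + ε) * t) := by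
    intro t; rw [← Real.exp_add]; ring_nf
  rcases hsgn with hpos | hneg
  · -- positive case
    have hlt : (∫ t in T..S, κ * Real.exp ((β + ε) * t))
        < ∫ t in T..S, Real.exp (α * t) * g t := by
      apply intervalIntegral.integral_lt_integral_of_continuousOn_of_le_of_exists_lt hTS
        (Continuous.continuousOn (by fun_prop)) (Continuous.continuousOn (by fun_prop))
      · intro x hx
        have hx' : x ∈ Icc T S := ⟨hx.1.le, hx.2⟩
        have h1 := hcon x hx'
        rw [abs_of_pos (hpos x hx')] at h1
        have h2 : Real.exp (α * x) * (κ * Real.exp (-(α - β) * x + ε * x))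
            ≤ Real.exp (α * x) * g x :=
          mul_le_mul_of_nonneg_left h1.le (Real.exp_pos _).le
        calc κ * Real.exp ((β + ε) * x)
            = Real.exp (α * x) * (κ * Real.exp (-(α - β) * x + ε * x)) := by
              rw [mul_comm (Real.exp (α * x)), mul_assoc, mul_comm (Real.exp (-(α - β) * x + ε * x)), hexpid]
          _ ≤ _ := h2
      · refine ⟨T, left_mem_Icc.2 hTS.le, ?_⟩
        have h1 := hcon T (left_mem_Icc.2 hTS.le)
        rw [abs_of_pos (hpos T (left_mem_Icc.2 hTS.le))] at h1
        have h2 : Real.exp (α * T) * (κ * Real.exp (-(α - β) * T + ε * T))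
            < Real.exp (α * T) * g T :=
          mul_lt_mul_of_pos_left h1 (Real.exp_pos _)
        calc κ * Real.exp ((β + ε) * T)
            = Real.exp (α * T) * (κ * Real.exp (-(α - β) * T + ε * T)) := by
              rw [mul_comm (Real.exp (α * T)), mul_assoc, mul_comm (Real.exp (-(α - β) * T + ε * T)), hexpid]
          _ < _ := h2
    rw [hJ] at hlt
    rw [← hI] at hlt
    have h3 := le_abs_self ((∫ t in Iic S, Real.exp (α * t) * g t) - (∫ t in Iic T, Real.exp (α * t) * g t))
    linarith
  · -- negative case
    have hlt : (∫ t in T..S, κ * Real.exp ((β + ε) * t))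
        < ∫ t in T..S, -(Real.exp (α * t) * g t) := by
      apply intervalIntegral.integral_lt_integral_of_continuousOn_of_le_of_exists_lt hTS
        (Continuous.continuousOn (by fun_prop)) (Continuous.continuousOn (by fun_prop))
      · intro x hx
        have hx' : x ∈ Icc T S := ⟨hx.1.le, hx.2⟩
        have h1 := hcon x hx'
        rw [abs_of_neg (hneg x hx')] at h1
        have h2 : Real.exp (α * x) * (κ * Real.exp (-(α - β) * x + ε * x))
            ≤ Real.exp (α * x) * (-g x) :=
          mul_le_mul_of_nonneg_left h1.le (Real.exp_pos _).le
        calc κ * Real.exp ((β + ε) * x)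
            = Real.exp (α * x) * (κ * Real.exp (-(α - β) * x + ε * x)) := by
              rw [mul_comm (Real.exp (α * x)), mul_assoc, mul_comm (Real.exp (-(α - β) * x + ε * x)), hexpid]
          _ ≤ Real.exp (α * x) * (-g x) := h2
          _ = -(Real.exp (α * x) * g x) := by ring
      · refine ⟨T, left_mem_Icc.2 hTS.le, ?_⟩
        have h1 := hcon T (left_mem_Icc.2 hTS.le)
        rw [abs_of_neg (hneg T (left_mem_Icc.2 hTS.le))] at h1
        have h2 : Real.exp (α * T) * (κ * Real.exp (-(α - β) * T + ε * T))
            < Real.exp (α * T) * (-g T) :=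
          mul_lt_mul_of_pos_left h1 (Real.exp_pos _)
        calc κ * Real.exp ((β + ε) * T)
            = Real.exp (α * T) * (κ * Real.exp (-(α - β) * T + ε * T)) := by
              rw [mul_comm (Real.exp (α * T)), mul_assoc, mul_comm (Real.exp (-(α - β) * T + ε * T)), hexpid]
          _ < Real.exp (α * T) * (-g T) := h2
          _ = -(Real.exp (α * T) * g T) := by ring
    rw [hJ] at hlt
    rw [intervalIntegral.integral_neg, ← hI] at hlt
    have h3 := neg_abs_le ((∫ t in Iic S, Real.exp (α * t) * g t) - (∫ t in Iic T, Real.exp (α * t) * g t))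
    linarith
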